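/- Let $n \ge 1$, $s \in (0,1)$, and let $g \in C^2(\mathbb{R}^n)$ be bounded with bounded first and second derivatives, and suppose $g$ is supported in $B_\epsilon$ for some $\epsilon \in (0,1)$, with $\|\nabla g\|_{L^\infty} \le C_0 \epsilon$ and $\|D^2 g\|_{L^\infty} \le C_0$. Then there is a constant $C = C(n,s,C_0)$ such that for all $x \in \mathbb{R}^n$ with $|x| \le 2$: $|(-\Delta)^s g(x)| \le C(\epsilon^{2s} + \epsilon^{2-2s})$. -/

import Mathlib

open MeasureTheory Metric Real Set Module
open scoped ENNReal NNReal

theorem lintegral_radial_aux {E : Type*} [NormedAddCommGroup E] [NormedSpace ℝ E]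
    [MeasurableSpace E] [BorelSpace E] [FiniteDimensional ℝ E] [Nontrivial E]
    (μ : Measure E) [μ.IsAddHaarMeasure] (F : ℝ → ℝ≥0∞) (hF : Measurable F) :
    ∫⁻ y, F ‖y‖ ∂μ = (finrank ℝ E) * μ (ball 0 1) *
      ∫⁻ r in Ioi (0:ℝ), ENNReal.ofReal (r ^ (finrank ℝ E - 1)) * F r := by
  have h0 : MeasurableSet ({(0:E)}ᶜ) := (measurableSet_singleton 0).compl
  have key : ∫⁻ r : Ioi (0:ℝ), F r.1 ∂(Measure.volumeIoiPow (finrank ℝ E - 1))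
      = ∫⁻ r in Ioi (0:ℝ), ENNReal.ofReal (r ^ (finrank ℝ E - 1)) * F r := by
    rw [Measure.volumeIoiPow]
    rw [lintegral_withDensity_eq_lintegral_mul (Measure.comap Subtype.val volume)
        (f := fun r : Ioi (0:ℝ) => ENNReal.ofReal (r.1 ^ (finrank ℝ E - 1)))
        (by fun_prop) (g := fun r : Ioi (0:ℝ) => F r.1) (hF.comp measurable_subtype_coe)]
    rw [← lintegral_subtype_comap measurableSet_Ioi
      (fun r : ℝ => ENNReal.ofReal (r ^ (finrank ℝ E - 1)) * F r)]
    rfl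
  calc ∫⁻ y, F ‖y‖ ∂μ = ∫⁻ y in ({(0:E)}ᶜ), F ‖y‖ ∂μ := by
        rw [restrict_compl_singleton]
    _ = ∫⁻ x : ({(0:E)}ᶜ : Set E), F ‖x.1‖ ∂(μ.comap (↑)) :=
        (lintegral_subtype_comap h0 (fun y => F ‖y‖)).symm
    _ = ∫⁻ p : (sphere (0:E) 1 × Ioi (0:ℝ)), F p.2.1
          ∂(μ.toSphere.prod (.volumeIoiPow (finrank ℝ E - 1))) :=
        by
          rw [← μ.measurePreserving_homeomorphUnitSphereProd.lintegral_comp_emb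
            (Homeomorph.measurableEmbedding _) (fun p => F p.2.1)]
          simp [homeomorphUnitSphereProd_apply_snd_coe]
    _ = μ.toSphere univ * ∫⁻ r : Ioi (0:ℝ), F r.1 ∂(.volumeIoiPow (finrank ℝ E - 1)) := by
        have := lintegral_prod_mul (μ := μ.toSphere) (ν := Measure.volumeIoiPow (finrank ℝ E - 1))
          (f := fun _ => (1:ℝ≥0∞)) (g := fun r : Ioi (0:ℝ) => F r.1)
          aemeasurable_const ((hF.comp measurable_subtype_coe).aemeasurable)
        simpa using this
    _ = _ := by rw [key, Measure.toSphere_apply_univ, mul_assoc]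

set_option maxHeartbeats 1000000 in
/-- If `g ∈ C²` is supported in `B_ε` with `‖∇g‖_∞ ≤ C₀ ε` and `‖D²g‖_∞ ≤ C₀`, then for
`|x| ≤ 2` one has `|(-Δ)^s g(x)| ≤ C (ε^{2s} + ε^{2-2s})` with `C = C(n,s,C₀)`.
The fractional Laplacian is written via the symmetric second-difference formula. -/
theorem fracLap_small_support_bound
    (n : ℕ) (hn : 1 ≤ n) (s : ℝ) (hs : s ∈ Set.Ioo (0:ℝ) 1)
    (Cns : ℝ) (hCns : 0 < Cns) (C0 : ℝ) (hC0 : 0 < C0) :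
    ∃ C : ℝ, 0 < C ∧
      ∀ ε ∈ Set.Ioo (0:ℝ) 1, ∀ g : EuclideanSpace ℝ (Fin n) → ℝ,
        ContDiff ℝ 2 g →
        tsupport g ⊆ closedBall (0 : EuclideanSpace ℝ (Fin n)) ε →
        (∀ x, ‖fderiv ℝ g x‖ ≤ C0 * ε) →
        (∀ x, ‖fderiv ℝ (fderiv ℝ g) x‖ ≤ C0) →
        ∀ x : EuclideanSpace ℝ (Fin n), ‖x‖ ≤ 2 →
          |(Cns / 2) * ∫ y, (2 * g x - g (x + y) - g (x - y)) / ‖y‖ ^ ((n:ℝ) + 2*s)|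
            ≤ C * (ε ^ (2*s) + ε ^ (2 - 2*s)) := by
  obtain ⟨hs0, hs1⟩ := hs
  set E := EuclideanSpace ℝ (Fin n) with hE
  haveI : Nonempty (Fin n) := ⟨⟨0, hn⟩⟩
  have hu1 : ‖(EuclideanSpace.single (⟨0, hn⟩ : Fin n) (1:ℝ) : E)‖ = 1 := by
    rw [EuclideanSpace.norm_single]; simp
  haveI : Nontrivial E := by
    refine ⟨0, EuclideanSpace.single (⟨0, hn⟩ : Fin n) (1:ℝ), fun h => ?_⟩
    have := hu1; rw [← h] at this; simp at this
  set κ : ℝ := (volume (ball (0:E) 1)).toReal with hκ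
  have hκ0 : 0 ≤ κ := ENNReal.toReal_nonneg
  have hsub : 0 < 2 - 2*s := by linarith
  have hKpos : 0 ≤ Cns * 6 * C0 * ((n:ℝ) * κ) * (1/(2-2*s) + 1/(2*s)) := by positivity
  refine ⟨Cns * 6 * C0 * ((n:ℝ) * κ) * (1/(2-2*s) + 1/(2*s)) + 1, by positivity, ?_⟩
  rintro ε ⟨hε0, hε1⟩ g hg hsupp h1 h2 x hx
  -- basic differentiability
  have hgdiff : Differentiable ℝ g := hg.differentiable (by norm_num)
  have hg'cd : ContDiff ℝ 1 (fderiv ℝ g) := hg.fderiv_right (by norm_num)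
  have hg'diff : Differentiable ℝ (fderiv ℝ g) := hg'cd.differentiable (by norm_num)
  -- Lipschitz bounds from the mean value inequality
  have hLipD : ∀ a b : E, ‖fderiv ℝ g a - fderiv ℝ g b‖ ≤ C0 * ‖a - b‖ := fun a b =>
    convex_univ.norm_image_sub_le_of_norm_fderiv_le
      (fun z _ => (hg'diff z)) (fun z _ => h2 z) (mem_univ b) (mem_univ a)
  have hLipg : ∀ a b : E, |g a - g b| ≤ (C0 * ε) * ‖a - b‖ := fun a b =>
    convex_univ.norm_image_sub_le_of_norm_fderiv_le
      (fun z _ => (hgdiff z)) (fun z _ => h1 z) (mem_univ b) (mem_univ a)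
  -- uniform bound on g
  have hgbdd : ∀ z : E, |g z| ≤ C0 * ε * (3*ε) := by
    intro z
    by_cases hz : ‖z‖ ≤ ε
    · set u : E := EuclideanSpace.single (⟨0, hn⟩ : Fin n) (1:ℝ) with hu
      have h3 : ‖(3*ε) • u‖ = 3*ε := by
        rw [norm_smul, hu1, mul_one, Real.norm_eq_abs, abs_of_nonneg (by linarith)]
      have hp : g (z + (3*ε) • u) = 0 := by
        apply image_eq_zero_of_notMem_tsupport
        intro hmem
        have hle := mem_closedBall_zero_iff.mp (hsupp hmem)
        have htri := norm_sub_norm_le ((3*ε) • u) (-z)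
        rw [norm_neg, sub_neg_eq_add, add_comm, h3] at htri
        linarith
      have hlip := hLipg (z + (3*ε) • u) z
      rw [hp] at hlip
      have hz3 : ‖z + (3*ε) • u - z‖ = 3*ε := by
        rw [show z + (3*ε) • u - z = (3*ε) • u by abel, h3]
      rw [hz3, abs_sub_comm] at hlip
      calc |g z| = |g z - 0| := by rw [sub_zero]
        _ ≤ C0 * ε * (3*ε) := hlip
    · have hzz : g z = 0 := by
        apply image_eq_zero_of_notMem_tsupport
        intro hmem
        exact hz (mem_closedBall_zero_iff.mp (hsupp hmem))
      rw [hzz, abs_zero]; positivity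
  -- second-difference bounds
  have hTaylor : ∀ y : E, |2 * g x - g (x + y) - g (x - y)| ≤ 2 * C0 * (‖y‖ * ‖y‖) := by
    intro y
    have hconv : Convex ℝ (closedBall x ‖y‖) := convex_closedBall _ _
    have hxmem : x ∈ closedBall x ‖y‖ := mem_closedBall_self (norm_nonneg y)
    have hbound : ∀ z ∈ closedBall x ‖y‖, ‖fderiv ℝ g z - fderiv ℝ g x‖ ≤ C0 * ‖y‖ := by
      intro z hz
      refine (hLipD z x).trans ?_
      have hzx : ‖z - x‖ ≤ ‖y‖ := by rwa [← dist_eq_norm, ← mem_closedBall]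
      exact mul_le_mul_of_nonneg_left hzx hC0.le
    have hA : ‖g (x+y) - g x - (fderiv ℝ g x) ((x+y) - x)‖ ≤ (C0 * ‖y‖) * ‖(x+y) - x‖ :=
      hconv.norm_image_sub_le_of_norm_fderiv_le' (fun z _ => hgdiff z) hbound hxmem
        (by simp [mem_closedBall, dist_eq_norm])
    have hB : ‖g (x-y) - g x - (fderiv ℝ g x) ((x-y) - x)‖ ≤ (C0 * ‖y‖) * ‖(x-y) - x‖ :=
      hconv.norm_image_sub_le_of_norm_fderiv_le' (fun z _ => hgdiff z) hbound hxmem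
        (by simp [mem_closedBall, dist_eq_norm])
    rw [show (x+y) - x = y by abel] at hA
    rw [show (x-y) - x = -y by abel, norm_neg] at hB
    have hsum := norm_add_le_of_le hA hB
    have hkey : (g (x+y) - g x - (fderiv ℝ g x) y) + (g (x-y) - g x - (fderiv ℝ g x) (-y))
        = -(2 * g x - g (x + y) - g (x - y)) := by
      rw [map_neg]; ring
    rw [hkey, norm_neg, Real.norm_eq_abs] at hsum
    calc |2 * g x - g (x + y) - g (x - y)| ≤ (C0*‖y‖)*‖y‖ + (C0*‖y‖)*‖y‖ := hsum
      _ = 2 * C0 * (‖y‖ * ‖y‖) := by ring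
  have hCrude : ∀ y : E, |2 * g x - g (x + y) - g (x - y)| ≤ 12 * C0 * (ε * ε) := by
    intro y
    have e1 : |2 * g x - g (x+y) - g (x-y)| ≤ |2 * g x - g (x+y)| + |g (x-y)| := abs_sub _ _
    have e2 : |2 * g x - g (x+y)| ≤ |2 * g x| + |g (x+y)| := abs_sub _ _
    rw [abs_mul, abs_two] at e2
    have b1 := hgbdd x; have b2 := hgbdd (x+y); have b3 := hgbdd (x-y)
    nlinarith
  -- pointwise bound on the integrand
  have hnum : ∀ y : E, |2 * g x - g (x + y) - g (x - y)|
      ≤ 12 * C0 * min (‖y‖ * ‖y‖) (ε * ε) := by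
    intro y
    rcases le_total (‖y‖ * ‖y‖) (ε * ε) with h | h
    · rw [min_eq_left h]
      calc |2 * g x - g (x + y) - g (x - y)| ≤ 2 * C0 * (‖y‖*‖y‖) := hTaylor y
        _ ≤ 12 * C0 * (‖y‖*‖y‖) := by nlinarith [mul_self_nonneg ‖y‖]
    · rw [min_eq_right h]; exact hCrude y
  set F : ℝ → ℝ≥0∞ := fun r => ENNReal.ofReal (12 * C0 * min (r*r) (ε*ε) * r ^ (-((n:ℝ)+2*s)))
    with hF
  have hFmeas : Measurable F := by fun_prop
  have hpt : ∀ y : E, ENNReal.ofReal ‖(2 * g x - g (x + y) - g (x - y)) / ‖y‖ ^ ((n:ℝ)+2*s)‖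
      ≤ F ‖y‖ := by
    intro y
    rw [Real.norm_eq_abs]
    apply ENNReal.ofReal_le_ofReal
    by_cases hy : y = 0
    · subst hy
      have h0' : (2 * g x - g (x + 0) - g (x - 0)) = 0 := by rw [add_zero, sub_zero]; ring
      rw [h0', zero_div, abs_zero]
      exact mul_nonneg (mul_nonneg (by positivity)
        (le_min (mul_self_nonneg _) (mul_self_nonneg _))) (Real.rpow_nonneg (norm_nonneg _) _)
    · have hy0 : 0 < ‖y‖ := norm_pos_iff.mpr hy
      have hD : 0 < ‖y‖ ^ ((n:ℝ)+2*s) := rpow_pos_of_pos hy0 _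
      have hrw : 12 * C0 * min (‖y‖*‖y‖) (ε*ε) * ‖y‖ ^ (-((n:ℝ)+2*s))
          = (12 * C0 * min (‖y‖*‖y‖) (ε*ε)) / ‖y‖ ^ ((n:ℝ)+2*s) := by
        rw [Real.rpow_neg (norm_nonneg y), div_eq_mul_inv]
      rw [hrw, abs_div, abs_of_pos hD]
      gcongr
      exact hnum y
  -- exponent juggling
  have hcast : ((n-1:ℕ):ℝ) = (n:ℝ) - 1 := by
    rw [Nat.cast_sub hn, Nat.cast_one]
  have hrr : ∀ r : ℝ, 0 < r → r * r = r ^ (2:ℝ) := by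
    intro r hr
    rw [show (2:ℝ) = ((2:ℕ):ℝ) by norm_num, Real.rpow_natCast]; ring
  have hpow1 : ∀ r : ℝ, 0 < r →
      (r:ℝ) ^ (n-1:ℕ) * ((r*r) * r ^ (-((n:ℝ)+2*s))) = r ^ (1-2*s) := by
    intro r hr
    rw [← Real.rpow_natCast r (n-1), hcast, hrr r hr, ← Real.rpow_add hr, ← Real.rpow_add hr,
      show ((n:ℝ)-1) + ((2:ℝ) + -((n:ℝ)+2*s)) = 1-2*s by ring]
  have hpow2 : ∀ r : ℝ, 0 < r →
      (r:ℝ) ^ (n-1:ℕ) * r ^ (-((n:ℝ)+2*s)) = r ^ (-1-2*s) := by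
    intro r hr
    rw [← Real.rpow_natCast r (n-1), hcast, ← Real.rpow_add hr,
      show ((n:ℝ)-1) + -((n:ℝ)+2*s) = -1-2*s by ring]
  -- inner 1-D estimate
  have hJ1 : ∫⁻ r in Ioc (0:ℝ) ε, ENNReal.ofReal (r ^ (n-1:ℕ)) * F r
      ≤ ENNReal.ofReal (12*C0*(ε^(2-2*s)/(2-2*s))) := by
    have hint : IntegrableOn (fun r : ℝ => 12*C0 * r^(1-2*s)) (Ioc 0 ε) := by
      have h := intervalIntegral.intervalIntegrable_rpow' (r := 1-2*s) (a := 0) (b := ε)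
        (by linarith)
      rw [intervalIntegrable_iff_integrableOn_Ioc_of_le hε0.le] at h
      exact h.const_mul _
    calc ∫⁻ r in Ioc (0:ℝ) ε, ENNReal.ofReal (r ^ (n-1:ℕ)) * F r
        ≤ ∫⁻ r in Ioc (0:ℝ) ε, ENNReal.ofReal (12*C0 * r^(1-2*s)) := by
          apply setLIntegral_mono (by fun_prop)
          intro r hr
          rw [hF, ← ENNReal.ofReal_mul (pow_nonneg hr.1.le _)]
          apply ENNReal.ofReal_le_ofReal
          have hmin : min (r*r) (ε*ε) = r*r := min_eq_left (by nlinarith [hr.1.le, hr.2])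
          rw [hmin]
          refine le_of_eq ?_
          calc r ^ (n-1:ℕ) * (12*C0 * (r*r) * r ^ (-((n:ℝ)+2*s)))
              = 12*C0 * (r ^ (n-1:ℕ) * ((r*r) * r ^ (-((n:ℝ)+2*s)))) := by ring
            _ = 12*C0 * r ^ (1-2*s) := by rw [hpow1 r hr.1]
      _ = ENNReal.ofReal (∫ r in Ioc (0:ℝ) ε, 12*C0 * r^(1-2*s)) := by
          rw [ofReal_integral_eq_lintegral_ofReal hint ?_]
          filter_upwards [ae_restrict_mem measurableSet_Ioc] with r hr
          have := hr.1.le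
          positivity
      _ ≤ _ := by
          apply ENNReal.ofReal_le_ofReal
          rw [← intervalIntegral.integral_of_le hε0.le, intervalIntegral.integral_const_mul,
            integral_rpow (Or.inl (by linarith)),
            show (1-2*s+1) = 2-2*s by ring, Real.zero_rpow hsub.ne', sub_zero]
  -- outer 1-D estimate
  have hJ2 : ∫⁻ r in Ioi ε, ENNReal.ofReal (r ^ (n-1:ℕ)) * F r
      ≤ ENNReal.ofReal (12*C0*(ε^(2-2*s)/(2*s))) := by
    have hint : IntegrableOn (fun r : ℝ => 12*C0*(ε*ε) * r^(-1-2*s)) (Ioi ε) :=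
      (integrableOn_Ioi_rpow_of_lt (by linarith) hε0).const_mul _
    calc ∫⁻ r in Ioi ε, ENNReal.ofReal (r ^ (n-1:ℕ)) * F r
        ≤ ∫⁻ r in Ioi ε, ENNReal.ofReal (12*C0*(ε*ε) * r^(-1-2*s)) := by
          apply setLIntegral_mono (by fun_prop)
          intro r hr
          have hr0 : 0 < r := hε0.trans hr
          rw [hF, ← ENNReal.ofReal_mul (pow_nonneg hr0.le _)]
          apply ENNReal.ofReal_le_ofReal
          calc r ^ (n-1:ℕ) * (12*C0 * min (r*r) (ε*ε) * r ^ (-((n:ℝ)+2*s)))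
              = 12*C0 * min (r*r) (ε*ε) * (r ^ (n-1:ℕ) * r ^ (-((n:ℝ)+2*s))) := by ring
            _ = 12*C0 * min (r*r) (ε*ε) * r ^ (-1-2*s) := by rw [hpow2 r hr0]
            _ ≤ 12*C0 * (ε*ε) * r ^ (-1-2*s) := by
                have h1' : min (r*r) (ε*ε) ≤ ε*ε := min_le_right _ _
                have h2' : (0:ℝ) ≤ r ^ (-1-2*s) := Real.rpow_nonneg hr0.le _
                nlinarith [mul_nonneg (mul_nonneg (by positivity : (0:ℝ) ≤ 12*C0) h2')
                  (sub_nonneg.mpr h1')]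
      _ = ENNReal.ofReal (∫ r in Ioi ε, 12*C0*(ε*ε) * r^(-1-2*s)) := by
          rw [ofReal_integral_eq_lintegral_ofReal hint ?_]
          filter_upwards [ae_restrict_mem measurableSet_Ioi] with r hr
          have hr0 : (0:ℝ) ≤ r := (hε0.trans hr).le
          positivity
      _ ≤ _ := by
          apply ENNReal.ofReal_le_ofReal
          rw [integral_const_mul, integral_Ioi_rpow_of_lt (by linarith) hε0,
            show (-1-2*s+1) = -(2*s) by ring, neg_div_neg_eq]
          have hee : ε*ε*ε^(-(2*s)) = ε^(2-2*s) := by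
            rw [hrr ε hε0, ← Real.rpow_add hε0, show (2:ℝ) + -(2*s) = 2-2*s by ring]
          refine le_of_eq ?_
          calc 12*C0*(ε*ε) * (ε ^ (-(2*s)) / (2*s)) = 12*C0 * ((ε*ε*ε^(-(2*s)))/(2*s)) := by ring
            _ = 12*C0*(ε^(2-2*s)/(2*s)) := by rw [hee]
  -- assemble
  set A : ℝ := 12*C0*(ε^(2-2*s)/(2-2*s)) with hA
  set B : ℝ := 12*C0*(ε^(2-2*s)/(2*s)) with hB
  have hAnn : 0 ≤ A := by positivity
  have hBnn : 0 ≤ B := by positivity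
  have hbig : ∫⁻ y : E, ENNReal.ofReal ‖(2 * g x - g (x + y) - g (x - y)) / ‖y‖ ^ ((n:ℝ)+2*s)‖
      ≤ ENNReal.ofReal ((n:ℝ)*κ * (A + B)) := by
    calc ∫⁻ y : E, ENNReal.ofReal ‖(2 * g x - g (x + y) - g (x - y)) / ‖y‖ ^ ((n:ℝ)+2*s)‖
        ≤ ∫⁻ y : E, F ‖y‖ := lintegral_mono hpt
      _ = (finrank ℝ E) * volume (ball (0:E) 1) *
            ∫⁻ r in Ioi (0:ℝ), ENNReal.ofReal (r ^ (finrank ℝ E - 1)) * F r :=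
          lintegral_radial_aux volume F hFmeas
      _ = (n:ℝ≥0∞) * volume (ball (0:E) 1) *
            ∫⁻ r in Ioi (0:ℝ), ENNReal.ofReal (r ^ (n - 1:ℕ)) * F r := by
          have : finrank ℝ E = n := finrank_euclideanSpace_fin
          rw [this]
      _ ≤ (n:ℝ≥0∞) * volume (ball (0:E) 1) *
            (ENNReal.ofReal A + ENNReal.ofReal B) := by
          gcongr
          calc ∫⁻ r in Ioi (0:ℝ), ENNReal.ofReal (r ^ (n - 1:ℕ)) * F r
              = ∫⁻ r in Ioc (0:ℝ) ε ∪ Ioi ε, ENNReal.ofReal (r ^ (n - 1:ℕ)) * F r := by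
                rw [Ioc_union_Ioi_eq_Ioi hε0.le]
            _ ≤ (∫⁻ r in Ioc (0:ℝ) ε, ENNReal.ofReal (r ^ (n - 1:ℕ)) * F r)
                + ∫⁻ r in Ioi ε, ENNReal.ofReal (r ^ (n - 1:ℕ)) * F r :=
                lintegral_union_le _ _ _
            _ ≤ _ := add_le_add hJ1 hJ2
      _ = ENNReal.ofReal ((n:ℝ)*κ * (A + B)) := by
          have hvol : volume (ball (0:E) 1) = ENNReal.ofReal κ :=
            (ENNReal.ofReal_toReal measure_ball_lt_top.ne).symm
          rw [hvol, ← ENNReal.ofReal_natCast n, ← ENNReal.ofReal_add hAnn hBnn,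
            ← ENNReal.ofReal_mul (Nat.cast_nonneg n), ← ENNReal.ofReal_mul (by positivity)]
  have habs := norm_integral_le_lintegral_norm (μ := (volume : Measure E))
    (fun y : E => (2 * g x - g (x + y) - g (x - y)) / ‖y‖ ^ ((n:ℝ)+2*s))
  rw [Real.norm_eq_abs] at habs
  have hfin : |∫ y : E, (2 * g x - g (x + y) - g (x - y)) / ‖y‖ ^ ((n:ℝ)+2*s)|
      ≤ (n:ℝ)*κ * (A + B) :=
    habs.trans (ENNReal.toReal_le_of_le_ofReal (by positivity) hbig)
  rw [abs_mul, abs_of_pos (by positivity : (0:ℝ) < Cns/2)]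
  have hT : Cns/2 * |∫ y : E, (2 * g x - g (x + y) - g (x - y)) / ‖y‖ ^ ((n:ℝ)+2*s)|
      ≤ Cns/2 * ((n:ℝ)*κ * (A + B)) := by
    apply mul_le_mul_of_nonneg_left hfin (by positivity)
  have heq : Cns/2 * ((n:ℝ)*κ * (A + B))
      = (Cns * 6 * C0 * ((n:ℝ) * κ) * (1/(2-2*s) + 1/(2*s))) * ε^(2-2*s) := by
    rw [hA, hB]; ring
  have h2s : (0:ℝ) ≤ ε^(2*s) := Real.rpow_nonneg hε0.le _
  have h22s : (0:ℝ) ≤ ε^(2-2*s) := Real.rpow_nonneg hε0.le _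
  nlinarith [hT, heq, hKpos, h2s, h22s, mul_nonneg hKpos h2s, mul_nonneg hKpos h22s]
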